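/- Let Z_1,…,Z_k ∈ ℝ^d satisfy the SDP r*-spread condition around μ for some r* > 0. Let X be a real symmetric positive semidefinite (1+k+d)×(1+k+d) matrix, indexed by 1, b_1,…,b_k, v_1,…,v_d, satisfying X_{1,1} = 1, X_{b_i,b_i} = X_{1,b_i} for all i, Σ_{j=1}^d X_{v_j,v_j} = 1, and Σ_{i=1}^k X_{b_i,b_i} ≥ 0.9·k. Then there is a set T ⊆ {1,…,k} with |T| ≥ 0.85·k such that ⟨Z_i − μ, v_{b_i}⟩ < X_{b_i,b_i}·r* for all i ∈ T, where v_{b_i} := (X_{b_i,v_1},…,X_{b_i,v_d}); and there is a set R ⊆ {1,…,k} with |R| ≥ k/3 such that X_{b_j,b_j} ≥ 0.85 for all j ∈ R. -/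

import Mathlib

noncomputable section

/-- The index type of the MT semidefinite program: a distinguished index `1` (`Sum.inl ()`),
indices `b i` for `i : Fin k` (`Sum.inr (Sum.inl i)`) and indices `v j` for `j : Fin D`
(`Sum.inr (Sum.inr j)`). -/
abbrev MTIdx (k D : ℕ) := Unit ⊕ Fin k ⊕ Fin D

/-- The distinguished index `1`. -/
abbrev idx1 {k D : ℕ} : MTIdx k D := Sum.inl ()

/-- The index `b i`. -/
abbrev idxb {k D : ℕ} (i : Fin k) : MTIdx k D := Sum.inr (Sum.inl i)

/-- The index `v j`. -/
abbrev idxv {k D : ℕ} (j : Fin D) : MTIdx k D := Sum.inr (Sum.inr j)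

/-- A real symmetric `(1+k+D) × (1+k+D)` matrix `X` is `MT(x, r, Z)`-feasible if it is positive
semidefinite, `X_{1,1} = 1`, `X_{1,b_i} = X_{b_i,b_i}`, `∑ j, X_{v_j,v_j} = 1` and
`⟨v_{b_i}, Z_i − x⟩ ≥ X_{b_i,b_i}·r` for all `i`, where `v_{b_i} = (X_{b_i,v_1},…,X_{b_i,v_D})`. -/
def MTFeasible {k D : ℕ} (Z : Fin k → EuclideanSpace ℝ (Fin D))
    (x : EuclideanSpace ℝ (Fin D)) (r : ℝ)
    (X : Matrix (MTIdx k D) (MTIdx k D) ℝ) : Prop :=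
  X.PosSemidef ∧
  X idx1 idx1 = 1 ∧
  (∀ i : Fin k, X idx1 (idxb i) = X (idxb i) (idxb i)) ∧
  (∑ j : Fin D, X (idxv j) (idxv j) = 1) ∧
  (∀ i : Fin k, X (idxb i) (idxb i) * r ≤ ∑ j : Fin D, X (idxb i) (idxv j) * (Z i - x) j)

/-- The objective `∑ i, X_{1, b_i}` of the MT semidefinite program. -/
def MTobj {k D : ℕ} (X : Matrix (MTIdx k D) (MTIdx k D) ℝ) : ℝ :=
  ∑ i : Fin k, X idx1 (idxb i)

/-- The sum of diagonal entries `∑ i, X_{b_i, b_i}`. -/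
def MTdiag {k D : ℕ} (X : Matrix (MTIdx k D) (MTIdx k D) ℝ) : ℝ :=
  ∑ i : Fin k, X (idxb i) (idxb i)

/-- The optimal value of `MT(x, r, Z)`: the supremum of `∑ i, X_{1,b_i}` over feasible `X`. -/
def MTval {k D : ℕ} (Z : Fin k → EuclideanSpace ℝ (Fin D))
    (x : EuclideanSpace ℝ (Fin D)) (r : ℝ) : ℝ :=
  sSup {s : ℝ | ∃ X : Matrix (MTIdx k D) (MTIdx k D) ℝ, MTFeasible Z x r X ∧ s = MTobj X}

/-- `Z₁,…,Z_k` satisfy the SDP `rstar`-spread condition around `μ`: for every `r ≥ rstar` and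
every `MT(μ, r, Z)`-feasible `X`, one has `∑ i, X_{b_i,b_i} ≤ k / 20`. -/
def SDPSpreadCond {k D : ℕ} (Z : Fin k → EuclideanSpace ℝ (Fin D))
    (μ : EuclideanSpace ℝ (Fin D)) (rstar : ℝ) : Prop :=
  ∀ r : ℝ, rstar ≤ r → ∀ X : Matrix (MTIdx k D) (MTIdx k D) ℝ,
    MTFeasible Z μ r X → MTdiag X ≤ (k : ℝ) / 20

lemma quad2 {α : Type*} [Fintype α] [DecidableEq α] {X : Matrix α α ℝ}
    (hpsd : X.PosSemidef) (i j : α) (hij : i ≠ j) (c d : ℝ) :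
    0 ≤ c * c * X i i + c * d * X i j + d * c * X j i + d * d * X j j := by
  have h := hpsd.dotProduct_mulVec_nonneg (Pi.single i c + Pi.single j d)
  simp only [star_trivial, Matrix.mulVec_add, dotProduct_add,
    add_dotProduct, Matrix.mulVec_single, single_dotProduct,
    Pi.single_apply, hij, hij.symm, if_true, if_false, if_neg hij,
    Pi.smul_apply, Matrix.col_apply, op_smul_eq_mul] at h
  ring_nf at h ⊢
  linarith

theorem stmt10 {k D : ℕ} (Z : Fin k → EuclideanSpace ℝ (Fin D))
    (μ : EuclideanSpace ℝ (Fin D)) (rstar : ℝ) (hrstar : 0 < rstar)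
    (hspread : SDPSpreadCond Z μ rstar)
    (X : Matrix (MTIdx k D) (MTIdx k D) ℝ) (hpsd : X.PosSemidef)
    (h11 : X idx1 idx1 = 1)
    (h1b : ∀ i : Fin k, X (idxb i) (idxb i) = X idx1 (idxb i))
    (hvv : ∑ j : Fin D, X (idxv j) (idxv j) = 1)
    (hbig : (0.9 : ℝ) * k ≤ MTdiag X) :
    (∃ T : Finset (Fin k), (0.85 : ℝ) * k ≤ (T.card : ℝ) ∧ ∀ i ∈ T,
        ∑ j : Fin D, X (idxb i) (idxv j) * (Z i - μ) j <
          X (idxb i) (idxb i) * rstar) ∧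
    (∃ R : Finset (Fin k), (k : ℝ) / 3 ≤ (R.card : ℝ) ∧ ∀ j ∈ R,
        (0.85 : ℝ) ≤ X (idxb j) (idxb j)) := by
  classical
  have hXsymm : ∀ m n, X m n = X n m := by
    intro m n
    have h := congrFun (congrFun hpsd.1 m) n
    simpa [Matrix.conjTranspose_apply] using h.symm
  -- diagonal bounds
  have hnn : ∀ i : Fin k, 0 ≤ X (idxb i) (idxb i) := by
    intro i
    have q := quad2 hpsd idx1 (idxb i) (by simp) 0 1
    simpa using q
  have hle1 : ∀ i : Fin k, X (idxb i) (idxb i) ≤ 1 := by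
    intro i
    set a := X (idxb i) (idxb i) with ha
    have q := quad2 hpsd idx1 (idxb i) (by simp) a (-1)
    rw [h11, ← h1b i, hXsymm (idxb i) idx1, ← h1b i] at q
    nlinarith [hnn i]
  -- the "bad" set
  set S : Finset (Fin k) := Finset.univ.filter (fun i =>
    X (idxb i) (idxb i) * rstar ≤ ∑ j : Fin D, X (idxb i) (idxv j) * (Z i - μ) j) with hSdef
  set c : MTIdx k D → ℝ := fun m =>
    Sum.elim (fun _ => (1:ℝ)) (Sum.elim (fun i => if i ∈ S then (1:ℝ) else 0) (fun _ => 1)) m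
    with hcdef
  set X' : Matrix (MTIdx k D) (MTIdx k D) ℝ :=
    Matrix.diagonal c * X * (Matrix.diagonal c).conjTranspose with hX'def
  have hX'entry : ∀ m n, X' m n = c m * X m n * c n := by
    intro m n
    rw [hX'def, Matrix.diagonal_conjTranspose, Matrix.mul_diagonal, Matrix.diagonal_mul]
    simp [mul_assoc]
  have hc1 : c idx1 = 1 := rfl
  have hcv : ∀ j : Fin D, c (idxv j) = 1 := fun _ => rfl
  have hcb : ∀ i : Fin k, c (idxb i) = if i ∈ S then 1 else 0 := fun _ => rfl
  have hfeas : MTFeasible Z μ rstar X' := by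
    refine ⟨hpsd.mul_mul_conjTranspose_same _, ?_, ?_, ?_, ?_⟩
    · rw [hX'entry, hc1, h11]; ring
    · intro i
      rw [hX'entry, hX'entry, hc1, hcb]
      by_cases hi : i ∈ S <;> simp [hi, h1b i]
    · calc ∑ j : Fin D, X' (idxv j) (idxv j)
          = ∑ j : Fin D, X (idxv j) (idxv j) := by
            refine Finset.sum_congr rfl fun j _ => ?_
            rw [hX'entry, hcv]; ring
        _ = 1 := hvv
    · intro i
      by_cases hi : i ∈ S
      · have hmem := (Finset.mem_filter.mp hi).2
        calc X' (idxb i) (idxb i) * rstar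
            = X (idxb i) (idxb i) * rstar := by rw [hX'entry, hcb, if_pos hi]; ring
          _ ≤ ∑ j : Fin D, X (idxb i) (idxv j) * (Z i - μ) j := hmem
          _ = ∑ j : Fin D, X' (idxb i) (idxv j) * (Z i - μ) j := by
              refine Finset.sum_congr rfl fun j _ => ?_
              rw [hX'entry, hcb, hcv, if_pos hi]; ring
      · have hz : ∀ j : Fin D, X' (idxb i) (idxv j) = 0 := by
          intro j; rw [hX'entry, hcb, if_neg hi]; ring
        have hz2 : X' (idxb i) (idxb i) = 0 := by
          rw [hX'entry, hcb, if_neg hi]; ring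
        simp [hz, hz2]
  have hSsum : ∑ i ∈ S, X (idxb i) (idxb i) ≤ (k : ℝ) / 20 := by
    have h := hspread rstar le_rfl X' hfeas
    have hdiag : MTdiag X' = ∑ i ∈ S, X (idxb i) (idxb i) := by
      rw [MTdiag]
      rw [← Finset.sum_filter_add_sum_filter_not Finset.univ (fun i => i ∈ S)]
      have h1 : ∀ i ∈ Finset.univ.filter (fun i => i ∈ S),
          X' (idxb i) (idxb i) = X (idxb i) (idxb i) := by
        intro i hi
        rw [hX'entry, hcb, if_pos (Finset.mem_filter.mp hi).2]; ring
      have h2 : ∀ i ∈ Finset.univ.filter (fun i => ¬ i ∈ S),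
          X' (idxb i) (idxb i) = 0 := by
        intro i hi
        rw [hX'entry, hcb, if_neg (Finset.mem_filter.mp hi).2]; ring
      rw [Finset.sum_congr rfl h1, Finset.sum_congr rfl h2, Finset.sum_const_zero, add_zero]
      congr 1
      ext i; simp
    linarith [hdiag ▸ h]
  constructor
  · refine ⟨Sᶜ, ?_, ?_⟩
    · have hsplit : ∑ i ∈ S, X (idxb i) (idxb i) + ∑ i ∈ Sᶜ, X (idxb i) (idxb i)
          = MTdiag X := Finset.sum_add_sum_compl S _
      have hcard : ∑ i ∈ Sᶜ, X (idxb i) (idxb i) ≤ (Sᶜ.card : ℝ) := by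
        calc ∑ i ∈ Sᶜ, X (idxb i) (idxb i) ≤ ∑ i ∈ Sᶜ, (1:ℝ) :=
              Finset.sum_le_sum fun i _ => hle1 i
          _ = (Sᶜ.card : ℝ) := by simp
      linarith
    · intro i hi
      have : i ∉ S := Finset.mem_compl.mp hi
      have := fun h => this (Finset.mem_filter.mpr ⟨Finset.mem_univ i, h⟩)
      exact lt_of_not_ge this
  · set R : Finset (Fin k) := Finset.univ.filter (fun j => (0.85:ℝ) ≤ X (idxb j) (idxb j))
      with hRdef
    refine ⟨R, ?_, fun j hj => (Finset.mem_filter.mp hj).2⟩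
    have hsplit : ∑ i ∈ R, X (idxb i) (idxb i) + ∑ i ∈ Rᶜ, X (idxb i) (idxb i)
        = MTdiag X := Finset.sum_add_sum_compl R _
    have hR1 : ∑ i ∈ R, X (idxb i) (idxb i) ≤ (R.card : ℝ) := by
      calc ∑ i ∈ R, X (idxb i) (idxb i) ≤ ∑ i ∈ R, (1:ℝ) :=
            Finset.sum_le_sum fun i _ => hle1 i
        _ = (R.card : ℝ) := by simp
    have hR2 : ∑ i ∈ Rᶜ, X (idxb i) (idxb i) ≤ (0.85:ℝ) * (Rᶜ.card : ℝ) := by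
      calc ∑ i ∈ Rᶜ, X (idxb i) (idxb i) ≤ ∑ i ∈ Rᶜ, (0.85:ℝ) := by
            refine Finset.sum_le_sum fun i hi => ?_
            have : i ∉ R := Finset.mem_compl.mp hi
            have := fun h => this (Finset.mem_filter.mpr ⟨Finset.mem_univ i, h⟩)
            linarith [lt_of_not_ge this]
        _ = (0.85:ℝ) * (Rᶜ.card : ℝ) := by
            rw [Finset.sum_const, nsmul_eq_mul, mul_comm]
    have hcompl : (Rᶜ.card : ℝ) = (k : ℝ) - (R.card : ℝ) := by
      have h1 : R.card ≤ k := by simpa using Finset.card_le_univ R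
      rw [Finset.card_compl, Fintype.card_fin, Nat.cast_sub h1]
    rw [hcompl] at hR2
    linarith
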